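/- With R_k, S_k defined by R_1 = 4d - c^2, S_1 = d, R_{k+1} = R_k^2 + cR_kS_k + dS_k^2, S_{k+1} = R_k^2: for all k ≥ 1, the minimal total degree among the monomials of R_k equals 2^{k-1}, and this minimum is achieved by a unique monomial, which is a power of d. -/

import Mathlib

open MvPolynomial

/-- The pair `(R_{m+1}, S_{m+1})` of polynomials in `c = X 0` and `d = X 1`:
`R_1 = 4d - c²`, `S_1 = d`, `R_{m+1} = R_m² + c·R_m·S_m + d·S_m²`, `S_{m+1} = R_m²`. -/
noncomputable def RS : ℕ → MvPolynomial (Fin 2) ℤ × MvPolynomial (Fin 2) ℤ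
  | 0 => (4 * X 1 - (X 0) ^ 2, X 1)
  | (m + 1) =>
      ((RS m).1 ^ 2 + X 0 * (RS m).1 * (RS m).2 + X 1 * (RS m).2 ^ 2, (RS m).1 ^ 2)

/-- `R_m` for `m ≥ 1`. -/
noncomputable def Rpoly (m : ℕ) : MvPolynomial (Fin 2) ℤ := (RS (m - 1)).1

/-- `S_m` for `m ≥ 1`. -/
noncomputable def Spoly (m : ℕ) : MvPolynomial (Fin 2) ℤ := (RS (m - 1)).2

namespace MinDegAux

open Pointwise

def D (m : Fin 2 →₀ ℕ) : ℕ := m 0 + m 1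

lemma D_add (a b : Fin 2 →₀ ℕ) : D (a + b) = D a + D b := by
  simp [D]; ring

noncomputable def e (n : ℕ) : Fin 2 →₀ ℕ := Finsupp.single 1 n

lemma D_e (n : ℕ) : D (e n) = n := by
  simp [D, e, Finsupp.single_apply]

lemma e_add (a b : ℕ) : e (a + b) = e a + e b := by
  simp [e, Finsupp.single_add]

lemma mul_deg {p q : MvPolynomial (Fin 2) ℤ} {a b : ℕ}
    (hp : ∀ m ∈ p.support, a ≤ D m) (hq : ∀ m ∈ q.support, b ≤ D m) :
    ∀ m ∈ (p * q).support, a + b ≤ D m := by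
  intro m hm
  obtain ⟨x, hx, y, hy, rfl⟩ := Finset.mem_add.1 (support_mul p q hm)
  rw [D_add]
  exact add_le_add (hp x hx) (hq y hy)

lemma mul_unique {p q : MvPolynomial (Fin 2) ℤ} {a b : ℕ}
    (hp : ∀ m ∈ p.support, a ≤ D m) (hq : ∀ m ∈ q.support, b ≤ D m)
    (hpu : ∀ m ∈ p.support, D m = a → m = e a)
    (hqu : ∀ m ∈ q.support, D m = b → m = e b) :
    ∀ m ∈ (p * q).support, D m = a + b → m = e (a + b) := by
  intro m hm hD
  obtain ⟨x, hx, y, hy, rfl⟩ := Finset.mem_add.1 (support_mul p q hm)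
  rw [D_add] at hD
  have hya := hq y hy
  have hxb := hp x hx
  have hxa : D x = a := by omega
  have hyb : D y = b := by omega
  rw [hpu x hx hxa, hqu y hy hyb, e_add]

lemma mul_coeff {p q : MvPolynomial (Fin 2) ℤ} {a b : ℕ}
    (hp : ∀ m ∈ p.support, a ≤ D m) (hq : ∀ m ∈ q.support, b ≤ D m)
    (hpu : ∀ m ∈ p.support, D m = a → m = e a)
    (hqu : ∀ m ∈ q.support, D m = b → m = e b) :
    coeff (e (a + b)) (p * q) = coeff (e a) p * coeff (e b) q := by
  rw [coeff_mul]
  refine Finset.sum_eq_single (e a, e b) ?_ ?_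
  · rintro ⟨x, y⟩ hxy hne
    rw [Finset.HasAntidiagonal.mem_antidiagonal] at hxy
    by_cases hx : x ∈ p.support
    · by_cases hy : y ∈ q.support
      · exfalso
        have hD : D x + D y = a + b := by rw [← D_add, hxy, D_e]
        have hxa : D x = a := le_antisymm (by have := hq y hy; omega) (hp x hx)
        have hyb : D y = b := le_antisymm (by have := hp x hx; omega) (hq y hy)
        exact hne (by rw [hpu x hx hxa, hqu y hy hyb])
      · simp [MvPolynomial.notMem_support_iff.1 hy]
    · simp [MvPolynomial.notMem_support_iff.1 hx]
  · intro h
    exact absurd (Finset.HasAntidiagonal.mem_antidiagonal.2 (e_add a b).symm) h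

lemma coeff_eq_zero_of_deg {p : MvPolynomial (Fin 2) ℤ} {a : ℕ}
    (hp : ∀ m ∈ p.support, a ≤ D m) {m : Fin 2 →₀ ℕ} (hm : D m < a) :
    coeff m p = 0 := by
  by_contra h
  exact absurd (hp m (MvPolynomial.mem_support_iff.2 h)) (by omega)

lemma X_deg (i : Fin 2) : ∀ m ∈ (X i : MvPolynomial (Fin 2) ℤ).support, 1 ≤ D m := by
  intro m hm
  rw [MvPolynomial.support_X, Finset.mem_singleton] at hm
  subst hm
  fin_cases i <;> simp [D, Finsupp.single_apply]

lemma inv (k : ℕ) :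
    ((∀ m ∈ (RS k).1.support, 2 ^ k ≤ D m) ∧
      (∀ m ∈ (RS k).1.support, D m = 2 ^ k → m = e (2 ^ k)) ∧
      coeff (e (2 ^ k)) (RS k).1 ≠ 0) ∧
    ((∀ m ∈ (RS k).2.support, 2 ^ k ≤ D m) ∧
      (∀ m ∈ (RS k).2.support, D m = 2 ^ k → m = e (2 ^ k)) ∧
      coeff (e (2 ^ k)) (RS k).2 ≠ 0) := by
  induction k with
  | zero =>
    have hco : ∀ n : Fin 2 →₀ ℕ, coeff n (RS 0).1 =
        4 * (if Finsupp.single 1 1 = n then 1 else 0) -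
        (if Finsupp.single 0 2 = n then 1 else 0) := by
      intro n
      show coeff n (4 * X 1 - (X 0) ^ 2) = _
      rw [coeff_sub, coeff_X_pow]
      have : coeff n ((4 : MvPolynomial (Fin 2) ℤ) * X 1) =
          4 * coeff n (X 1) := by
        have : ((4 : MvPolynomial (Fin 2) ℤ)) = C 4 := by simp
        rw [this, coeff_C_mul]
      rw [this, coeff_X']
    have hne : (Finsupp.single (0 : Fin 2) 2) ≠ Finsupp.single 1 1 := by
      intro h
      have := DFunLike.congr_fun h 0
      simp [Finsupp.single_apply] at this
    have hsupp : ∀ m ∈ (RS 0).1.support,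
        m = Finsupp.single 1 1 ∨ m = Finsupp.single 0 2 := by
      intro m hm
      rw [MvPolynomial.mem_support_iff, hco] at hm
      by_cases h1 : Finsupp.single (1 : Fin 2) 1 = m
      · exact Or.inl h1.symm
      by_cases h2 : Finsupp.single (0 : Fin 2) 2 = m
      · exact Or.inr h2.symm
      simp [h1, h2] at hm
    refine ⟨⟨?_, ?_, ?_⟩, ?_, ?_, ?_⟩
    · intro m hm
      rcases hsupp m hm with rfl | rfl <;> simp [D, Finsupp.single_apply]
    · intro m hm hD
      rcases hsupp m hm with rfl | rfl
      · rfl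
      · simp [D, Finsupp.single_apply] at hD
    · rw [hco]
      simp [e, hne]
    · intro m hm
      have hm' : m ∈ (X 1 : MvPolynomial (Fin 2) ℤ).support := hm
      rw [MvPolynomial.support_X, Finset.mem_singleton] at hm'
      subst hm'; simp [D, Finsupp.single_apply]
    · intro m hm _
      have hm' : m ∈ (X 1 : MvPolynomial (Fin 2) ℤ).support := hm
      rw [MvPolynomial.support_X, Finset.mem_singleton] at hm'
      exact hm'
    · show coeff (e 1) (X 1 : MvPolynomial (Fin 2) ℤ) ≠ 0
      simp [e, coeff_X']
  | succ k ih =>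
    obtain ⟨⟨hRd, hRu, hRc⟩, hSd, hSu, hSc⟩ := ih
    set R := (RS k).1
    set S := (RS k).2
    have hpow : (2 : ℕ) ^ (k + 1) = 2 ^ k + 2 ^ k := by ring
    -- facts about R * R
    have hRRd : ∀ m ∈ (R * R).support, 2 ^ k + 2 ^ k ≤ D m := mul_deg hRd hRd
    have hRRu : ∀ m ∈ (R * R).support, D m = 2 ^ k + 2 ^ k → m = e (2 ^ k + 2 ^ k) :=
      mul_unique hRd hRd hRu hRu
    have hRRc : coeff (e (2 ^ k + 2 ^ k)) (R * R) ≠ 0 := by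
      rw [mul_coeff hRd hRd hRu hRu]
      exact mul_ne_zero hRc hRc
    -- X 0 * R * S has all degrees ≥ 2^k + 2^k + 1
    have hT1 : ∀ m ∈ (X 0 * R * S).support, 2 ^ k + 2 ^ k + 1 ≤ D m := by
      have h1 : ∀ m ∈ ((X 0 : MvPolynomial (Fin 2) ℤ) * R).support, 1 + 2 ^ k ≤ D m :=
        mul_deg (X_deg 0) hRd
      have := mul_deg h1 hSd
      intro m hm
      have := this m hm
      omega
    have hT2 : ∀ m ∈ (X 1 * S * S).support, 2 ^ k + 2 ^ k + 1 ≤ D m := by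
      have h1 : ∀ m ∈ ((X 1 : MvPolynomial (Fin 2) ℤ) * S).support, 1 + 2 ^ k ≤ D m :=
        mul_deg (X_deg 1) hSd
      have := mul_deg h1 hSd
      intro m hm
      have := this m hm
      omega
    have hRdef : (RS (k + 1)).1 = R * R + X 0 * R * S + X 1 * (S * S) := by
      show R ^ 2 + X 0 * R * S + X 1 * S ^ 2 = _
      ring
    have hSdef : (RS (k + 1)).2 = R * R := by
      show R ^ 2 = _; ring
    have hXSS : ∀ m ∈ ((X 1 : MvPolynomial (Fin 2) ℤ) * (S * S)).support,
        2 ^ k + 2 ^ k + 1 ≤ D m := by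
      intro m hm
      have : X 1 * (S * S) = X 1 * S * S := by ring
      rw [this] at hm
      exact hT2 m hm
    constructor
    · rw [hRdef]
      refine ⟨?_, ?_, ?_⟩
      · intro m hm
        rcases Finset.mem_union.1 (MvPolynomial.support_add hm) with h | h
        · rcases Finset.mem_union.1 (MvPolynomial.support_add h) with h' | h'
          · rw [hpow]; exact hRRd m h'
          · have := hT1 m h'; omega
        · have := hXSS m h; omega
      · intro m hm hD
        rcases Finset.mem_union.1 (MvPolynomial.support_add hm) with h | h
        · rcases Finset.mem_union.1 (MvPolynomial.support_add h) with h' | h'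
          · rw [hpow] at hD ⊢
            exact hRRu m h' hD
          · have := hT1 m h'; omega
        · have := hXSS m h; omega
      · have he : e (2 ^ (k + 1)) = e (2 ^ k + 2 ^ k) := by rw [hpow]
        rw [coeff_add, coeff_add,
          coeff_eq_zero_of_deg hT1 (by rw [D_e]; omega),
          coeff_eq_zero_of_deg hXSS (by rw [D_e]; omega), he]
        simpa using hRRc
    · rw [hSdef, hpow]
      exact ⟨hRRd, hRRu, hRRc⟩

end MinDegAux

theorem minimal_degree_monomial_Rpoly (k : ℕ) (hk : 1 ≤ k) :
    (∀ m ∈ (Rpoly k).support, 2 ^ (k - 1) ≤ m 0 + m 1) ∧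
    ∃ m ∈ (Rpoly k).support, m 0 + m 1 = 2 ^ (k - 1) ∧ m 0 = 0 ∧
      ∀ m' ∈ (Rpoly k).support, m' 0 + m' 1 = 2 ^ (k - 1) → m' = m := by
  obtain ⟨⟨hA, hB, hC⟩, -⟩ := MinDegAux.inv (k - 1)
  refine ⟨hA, MinDegAux.e (2 ^ (k - 1)), MvPolynomial.mem_support_iff.2 hC, ?_, ?_, hB⟩
  · exact MinDegAux.D_e _
  · simp [MinDegAux.e, Finsupp.single_apply]
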